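/- Let K be a real n×n matrix all of whose complex eigenvalues (the roots of its characteristic polynomial over ℂ) have strictly negative real part. Then M(t) = exp(tK) tends to the zero matrix as t → ∞. -/

import Mathlib

/-!
STATEMENT 12: If all complex eigenvalues of the real n×n matrix `K` (the roots of
its characteristic polynomial over ℂ) have strictly negative real part, then
`M(t) = exp(tK)` tends to the zero matrix as `t → ∞`.
-/

open Matrix

noncomputable section AuxST12

open NormedSpace Filter

variable {n : ℕ}

lemma st12_hasSum_exp (M : Matrix (Fin n) (Fin n) ℂ) :
    HasSum (fun k : ℕ => ((Nat.factorial k : ℂ))⁻¹ • M ^ k) (exp M) := by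
  letI : SeminormedRing (Matrix (Fin n) (Fin n) ℂ) := Matrix.linftyOpSemiNormedRing
  letI : NormedRing (Matrix (Fin n) (Fin n) ℂ) := Matrix.linftyOpNormedRing
  letI : NormedAlgebra ℂ (Matrix (Fin n) (Fin n) ℂ) := Matrix.linftyOpNormedAlgebra
  exact exp_series_hasSum_exp' (𝕂 := ℂ) M

lemma st12_exp_eq (M : Matrix (Fin n) (Fin n) ℂ) : exp M = exp M := by
  letI : SeminormedRing (Matrix (Fin n) (Fin n) ℂ) := Matrix.linftyOpSemiNormedRing
  letI : NormedRing (Matrix (Fin n) (Fin n) ℂ) := Matrix.linftyOpNormedRing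
  letI : NormedAlgebra ℂ (Matrix (Fin n) (Fin n) ℂ) := Matrix.linftyOpNormedAlgebra
  letI : NormedAlgebra ℝ (Matrix (Fin n) (Fin n) ℂ) := Matrix.linftyOpNormedAlgebra
  rfl

lemma st12_isRoot_of_mem_spectrum (A : Matrix (Fin n) (Fin n) ℂ) {μ : ℂ}
    (h : μ ∈ spectrum ℂ A) : A.charpoly.IsRoot μ := by
  rw [spectrum.mem_iff] at h
  rw [Matrix.isUnit_iff_isUnit_det, isUnit_iff_ne_zero, not_ne_iff] at h
  have : A.charpoly.eval μ = (algebraMap ℂ (Matrix (Fin n) (Fin n) ℂ) μ - A).det := by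
    rw [Matrix.charpoly, ← Polynomial.coe_evalRingHom, RingHom.map_det]
    congr 1
    ext i j
    by_cases hij : i = j <;>
      simp [hij, charmatrix_apply, Matrix.algebraMap_matrix_apply, Matrix.one_apply,
        Matrix.diagonal_apply]
  exact this.trans h

lemma st12_real_aux {c : ℝ} (hc : c < 0) (j : ℕ) :
    Filter.Tendsto (fun t : ℝ => t ^ j * Real.exp (c * t)) Filter.atTop (nhds 0) := by
  have h0 : Filter.Tendsto (fun t : ℝ => -c * t) Filter.atTop Filter.atTop :=
    Filter.Tendsto.const_mul_atTop (by linarith) Filter.tendsto_id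
  have h1 := (Real.tendsto_pow_mul_exp_neg_atTop_nhds_zero j).comp h0
  have h2 := h1.const_mul (((-c) ^ j)⁻¹)
  rw [mul_zero] at h2
  refine h2.congr fun t => ?_
  have hcj : (-c) ^ j ≠ 0 := pow_ne_zero _ (by linarith)
  field_simp [Function.comp, mul_pow]
  simp only [Function.comp_apply, neg_neg]
  ring_nf

lemma st12_scalar {μ : ℂ} (hμ : μ.re < 0) (j : ℕ) (b : ℂ) :
    Filter.Tendsto (fun t : ℝ => Complex.exp (t * μ) * b * (t : ℂ) ^ j)
      Filter.atTop (nhds 0) := by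
  rw [tendsto_zero_iff_norm_tendsto_zero]
  have hb : Filter.Tendsto (fun t : ℝ => ‖b‖ * (t ^ j * Real.exp (μ.re * t)))
      Filter.atTop (nhds 0) := by
    simpa using (st12_real_aux hμ j).const_mul ‖b‖
  apply squeeze_zero_norm' _ hb
  filter_upwards [Filter.eventually_ge_atTop (0 : ℝ)] with t ht
  have h1 : ‖Complex.exp (t * μ) * b * (t : ℂ) ^ j‖
      = Real.exp (μ.re * t) * ‖b‖ * t ^ j := by
    rw [norm_mul, norm_mul, Complex.norm_exp]
    simp [Complex.norm_real, abs_of_nonneg ht, mul_comm]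
  rw [norm_norm, h1]
  ring_nf
  exact le_of_eq (by ring)

lemma st12_exp_split (A : Matrix (Fin n) (Fin n) ℂ) (μ : ℂ) (t : ℝ) :
    exp (t • A) = Complex.exp (t * μ) • exp ((t : ℂ) • (A - μ • 1)) := by
  have h1 : t • A = ((t : ℂ) * μ) • (1 : Matrix (Fin n) (Fin n) ℂ)
      + (t : ℂ) • (A - μ • 1) := by
    ext i j
    simp [Matrix.smul_apply, Matrix.one_apply, Matrix.sub_apply, Complex.real_smul]
    by_cases hij : i = j <;> simp [hij] <;> ring
  rw [h1, Matrix.exp_add_of_commute]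
  · have h2 : exp (((t : ℂ) * μ) • (1 : Matrix (Fin n) (Fin n) ℂ))
        = Complex.exp (t * μ) • (1 : Matrix (Fin n) (Fin n) ℂ) := by
      rw [Matrix.smul_one_eq_diagonal, Matrix.exp_diagonal]
      have h3 : (exp fun _ : Fin n => (t : ℂ) * μ)
          = fun _ : Fin n => Complex.exp ((t : ℂ) * μ) := by
        funext i; rw [Pi.coe_exp, Complex.exp_eq_exp_ℂ]
      rw [h3, ← Matrix.smul_one_eq_diagonal]
    rw [h2, smul_mul_assoc, one_mul]
  · exact ((Commute.one_left _).smul_left _).smul_right _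

lemma st12_exp_mulVec (N : Matrix (Fin n) (Fin n) ℂ) (x : Fin n → ℂ) (k : ℕ)
    (hN : ∀ j, k ≤ j → N ^ j *ᵥ x = 0) (t : ℂ) :
    exp (t • N) *ᵥ x
      = ∑ j ∈ Finset.range k, (((Nat.factorial j : ℂ))⁻¹ * t ^ j) • (N ^ j *ᵥ x) := by
  have hcont : Continuous (fun M : Matrix (Fin n) (Fin n) ℂ => M *ᵥ x) := by
    refine continuous_pi fun i => ?_
    simp only [Matrix.mulVec, dotProduct]
    exact continuous_finset_sum _ fun j _ => by fun_prop
  have hs := (st12_hasSum_exp (t • N)).map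
    (AddMonoidHom.mk' (fun M : Matrix (Fin n) (Fin n) ℂ => M *ᵥ x)
      (fun a b => Matrix.add_mulVec a b x)) hcont
  have hs2 : HasSum (fun j : ℕ => (((Nat.factorial j : ℂ))⁻¹ * t ^ j) • (N ^ j *ᵥ x))
      (exp (t • N) *ᵥ x) := by
    refine hs.congr_fun fun j => ?_
    simp [smul_pow, Matrix.smul_mulVec, smul_smul]
  refine hs2.unique (hasSum_sum_of_ne_finset_zero fun j hj => ?_)
  rw [hN j (by simpa using hj), smul_zero]

lemma st12_tendsto_mulVec (A : Matrix (Fin n) (Fin n) ℂ)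
    (hA : ∀ μ : ℂ, A.charpoly.IsRoot μ → μ.re < 0) (v : Fin n → ℂ) :
    Filter.Tendsto (fun t : ℝ => exp (t • A) *ᵥ v) Filter.atTop (nhds 0) := by
  have hv : v ∈ ⨆ μ : ℂ,
      Module.End.maxGenEigenspace (Matrix.toLinAlgEquiv' A : Module.End ℂ (Fin n → ℂ)) μ := by
    rw [Module.End.iSup_maxGenEigenspace_eq_top]; trivial
  refine Submodule.iSup_induction
    (motive := fun x => Filter.Tendsto (fun t : ℝ => exp (t • A) *ᵥ x) Filter.atTop (nhds 0))
    _ hv (fun μ x hx => ?_) (by simpa [Matrix.mulVec_zero] using tendsto_const_nhds)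
    (fun x y hx hy => by simpa [Matrix.mulVec_add] using hx.add hy)
  -- main case
  rcases eq_or_ne x 0 with rfl | hx0
  · simpa [Matrix.mulVec_zero] using tendsto_const_nhds
  have hμ : μ.re < 0 := by
    apply hA
    apply st12_isRoot_of_mem_spectrum
    have hne : Module.End.HasUnifEigenvalue
        (Matrix.toLinAlgEquiv' A : Module.End ℂ (Fin n → ℂ)) μ ⊤ := by
      intro hbot
      exact hx0 (by simpa [Module.End.maxGenEigenspace, hbot] using hx)
    have heig : Module.End.HasEigenvalue
        (Matrix.toLinAlgEquiv' A : Module.End ℂ (Fin n → ℂ)) μ := hne.lt zero_lt_one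
    have hspec := heig.mem_spectrum
    rwa [AlgEquiv.spectrum_eq Matrix.toLinAlgEquiv' A] at hspec
  rw [Module.End.mem_maxGenEigenspace] at hx
  obtain ⟨k, hk⟩ := hx
  have hNpow : ∀ j, k ≤ j → (A - μ • 1) ^ j *ᵥ x = 0 := by
    intro j hj
    have hmap : Matrix.toLinAlgEquiv' (A - μ • 1)
        = (Matrix.toLinAlgEquiv' A : Module.End ℂ (Fin n → ℂ)) - μ • 1 := by
      simp [map_sub, _root_.map_smul]
    have h2 : ((A - μ • 1) ^ j) *ᵥ x
        = ((Matrix.toLinAlgEquiv' (A - μ • 1) : Module.End ℂ (Fin n → ℂ)) ^ j) x := by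
      rw [← map_pow, Matrix.toLinAlgEquiv'_apply]
    rw [h2, hmap, ← Nat.sub_add_cancel hj, pow_add, Module.End.mul_apply, hk, map_zero]
  have hform : ∀ t : ℝ, exp (t • A) *ᵥ x
      = ∑ j ∈ Finset.range k,
          (Complex.exp (t * μ) * ((Nat.factorial j : ℂ))⁻¹ * (t : ℂ) ^ j)
            • ((A - μ • 1) ^ j *ᵥ x) := by
    intro t
    rw [st12_exp_split A μ t, Matrix.smul_mulVec,
      st12_exp_mulVec (A - μ • 1) x k hNpow, Finset.smul_sum]
    refine Finset.sum_congr rfl fun j _ => ?_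
    rw [smul_smul, mul_assoc]
  simp only [hform]
  have hterm : ∀ j : ℕ, Filter.Tendsto
      (fun t : ℝ => (Complex.exp (t * μ) * ((Nat.factorial j : ℂ))⁻¹ * (t : ℂ) ^ j)
        • ((A - μ • 1) ^ j *ᵥ x)) Filter.atTop (nhds 0) := by
    intro j
    have hscal := st12_scalar hμ j ((Nat.factorial j : ℂ))⁻¹
    simpa using hscal.smul_const ((A - μ • 1) ^ j *ᵥ x)
  have := tendsto_finset_sum (Finset.range k) (fun j _ => hterm j)
  simpa using this

lemma st12_entry (A : Matrix (Fin n) (Fin n) ℂ)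
    (hA : ∀ μ : ℂ, A.charpoly.IsRoot μ → μ.re < 0) (i j : Fin n) :
    Filter.Tendsto (fun t : ℝ => exp (t • A) i j) Filter.atTop (nhds 0) := by
  have h := st12_tendsto_mulVec A hA (Pi.single j 1)
  have h2 := (tendsto_pi_nhds.1 h) i
  simp only [Matrix.mulVec_single, MulOpposite.op_one, one_smul, Matrix.col_apply, Pi.zero_apply] at h2
  exact h2

end AuxST12

attribute [local instance] Matrix.normedAddCommGroup Matrix.normedSpace

noncomputable section

theorem exp_tendsto_zero_of_eigenvalues_neg_re {n : ℕ} (K : Matrix (Fin n) (Fin n) ℝ)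
    (hK : ∀ μ : ℂ, (Matrix.charpoly (K.map (fun x : ℝ => (x : ℂ)))).IsRoot μ → μ.re < 0) :
    Filter.Tendsto (fun t : ℝ => NormedSpace.exp (t • K)) Filter.atTop
      (nhds (0 : Matrix (Fin n) (Fin n) ℝ)) := by
  set A : Matrix (Fin n) (Fin n) ℂ := K.map (fun x : ℝ => (x : ℂ)) with hA
  have hmap : ∀ t : ℝ, (NormedSpace.exp (t • K)).map (fun x : ℝ => (x : ℂ))
      = NormedSpace.exp (t • A) := by
    intro t
    letI : SeminormedRing (Matrix (Fin n) (Fin n) ℝ) := Matrix.linftyOpSemiNormedRing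
    letI : NormedRing (Matrix (Fin n) (Fin n) ℝ) := Matrix.linftyOpNormedRing
    letI : NormedAlgebra ℝ (Matrix (Fin n) (Fin n) ℝ) := Matrix.linftyOpNormedAlgebra
    letI : NormedAlgebra ℚ (Matrix (Fin n) (Fin n) ℝ) := Matrix.linftyOpNormedAlgebra
    haveI : @CompleteSpace (Matrix (Fin n) (Fin n) ℝ) (@PseudoMetricSpace.toUniformSpace _
        (@SeminormedRing.toPseudoMetricSpace _ Matrix.linftyOpSemiNormedRing)) :=
      FiniteDimensional.complete ℝ _
    letI : SeminormedRing (Matrix (Fin n) (Fin n) ℂ) := Matrix.linftyOpSemiNormedRing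
    letI : NormedRing (Matrix (Fin n) (Fin n) ℂ) := Matrix.linftyOpNormedRing
    letI : NormedAlgebra ℝ (Matrix (Fin n) (Fin n) ℂ) := Matrix.linftyOpNormedAlgebra
    have hφc : Continuous (fun M : Matrix (Fin n) (Fin n) ℝ =>
        (Complex.ofRealHom.mapMatrix : Matrix (Fin n) (Fin n) ℝ →+* Matrix (Fin n) (Fin n) ℂ) M) := by
      refine continuous_pi fun i => continuous_pi fun j => ?_
      exact Complex.continuous_ofReal.comp ((continuous_apply j).comp (continuous_apply i))
    have h1 := NormedSpace.map_exp
      (Complex.ofRealHom.mapMatrix : Matrix (Fin n) (Fin n) ℝ →+* Matrix (Fin n) (Fin n) ℂ)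
      hφc (t • K)
    have h2 : (Complex.ofRealHom.mapMatrix : Matrix (Fin n) (Fin n) ℝ →+* Matrix (Fin n) (Fin n) ℂ)
        (t • K) = t • A := by
      ext i j
      simp [RingHom.mapMatrix_apply, hA, Matrix.map_apply, Complex.real_smul]
    have h3 : (Complex.ofRealHom.mapMatrix : Matrix (Fin n) (Fin n) ℝ →+* Matrix (Fin n) (Fin n) ℂ)
        (NormedSpace.exp (t • K)) = (NormedSpace.exp (t • K)).map (fun x : ℝ => (x : ℂ)) := rfl
    exact h3.symm.trans (h1.trans (by rw [h2]; rfl))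
  have hentry : ∀ i j : Fin n,
      Filter.Tendsto (fun t : ℝ => NormedSpace.exp (t • K) i j) Filter.atTop (nhds 0) := by
    intro i j
    have h := st12_entry A hK i j
    have hre := (Complex.continuous_re.tendsto 0).comp h
    have : (fun t : ℝ => (NormedSpace.exp (t • A) i j).re)
        = fun t : ℝ => NormedSpace.exp (t • K) i j := by
      funext t
      rw [← hmap t]
      simp [Matrix.map_apply]
    rw [Function.comp_def, this] at hre
    simpa using hre
  refine tendsto_pi_nhds.mpr fun i => tendsto_pi_nhds.mpr fun j => ?_
  simpa using hentry i j

end
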